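/- Let y : ℝ → ℝ^m be a solution of the system (hcu) defined on all of ℝ which is not identically equal to zero. Then s(t) = 2·Σ_{k=1}^m y_k'(t) − Q(t) − S(t)² is strictly negative for every t ∈ ℝ. -/

import Mathlib

/-- For a solution of the system (hcu) defined on all of `ℝ` and
not identically zero, the constant `s(t) = 2·Σ yₖ' − Σ yₖ² − (Σ yₖ)²` is
strictly negative at every `t`. -/
theorem stmt_5 (m : ℕ) (hm : 1 ≤ m)
    (y y' y'' : ℝ → Fin m → ℝ)
    (hy : ∀ j, ∀ t : ℝ, HasDerivAt (fun s => y s j) (y' t j) t)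
    (hy' : ∀ j, ∀ t : ℝ, HasDerivAt (fun s => y' s j) (y'' t j) t)
    (hcu : ∀ j, ∀ t : ℝ,
      y'' t j - ((∑ k, y t k) + y t j) * y' t j
        = y t j * (∑ k, (y t k) ^ 2) - (y t j) ^ 2 * (∑ k, y t k))
    (hnz : ∃ t : ℝ, ∃ j, y t j ≠ 0) :
    ∀ t : ℝ, 2 * (∑ k, y' t k) - (∑ k, (y t k) ^ 2) - (∑ k, y t k) ^ 2 < 0 := by
  set S : ℝ → ℝ := fun t => ∑ k, y t k with hSdef
  set Q : ℝ → ℝ := fun t => ∑ k, (y t k) ^ 2 with hQdef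
  set s : ℝ → ℝ := fun t => 2 * (∑ k, y' t k) - Q t - (S t) ^ 2 with hsdef
  -- derivatives of S and Q
  have hS : ∀ t : ℝ, HasDerivAt S (∑ k, y' t k) t := fun t =>
    HasDerivAt.fun_sum (fun k _ => hy k t)
  have hQ : ∀ t : ℝ, HasDerivAt Q (∑ k, 2 * y t k * y' t k) t := by
    intro t
    have := HasDerivAt.fun_sum (u := Finset.univ)
      (A := fun k u => (y u k) ^ 2) (A' := fun k => (2 : ℕ) * y t k ^ (2 - 1) * y' t k)
      (fun k _ => (hy k t).pow 2)
    refine this.congr_deriv (Finset.sum_congr rfl fun k _ => ?_)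
    push_cast
    ring
  -- the sum of the equations
  have hsum : ∀ t : ℝ, ∑ k, y'' t k
      = S t * (∑ k, y' t k) + (∑ k, y t k * y' t k) := by
    intro t
    have h1 : ∀ j, y'' t j = (S t + y t j) * y' t j + y t j * Q t - (y t j) ^ 2 * S t := by
      intro j
      have := hcu j t
      simp only [hSdef, hQdef]
      linarith
    have e1 : ∑ k, y'' t k
        = (∑ k, S t * y' t k) + (∑ k, y t k * y' t k)
          + (∑ k, y t k * Q t) - (∑ k, (y t k) ^ 2 * S t) := by
      rw [← Finset.sum_add_distrib, ← Finset.sum_add_distrib, ← Finset.sum_sub_distrib]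
      exact Finset.sum_congr rfl (fun k _ => by rw [h1 k]; ring)
    rw [e1, ← Finset.mul_sum, ← Finset.sum_mul, ← Finset.sum_mul]
    show S t * (∑ k, y' t k) + (∑ k, y t k * y' t k) + S t * Q t - Q t * S t
      = S t * (∑ k, y' t k) + (∑ k, y t k * y' t k)
    ring
  -- s has zero derivative
  have hsderiv : ∀ t : ℝ, HasDerivAt s 0 t := by
    intro t
    have hA : HasDerivAt (fun u => 2 * (∑ k, y' u k)) (2 * ∑ k, y'' t k) t :=
      (HasDerivAt.fun_sum (fun k _ => hy' k t)).const_mul 2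
    have hB : HasDerivAt (fun u => (S u) ^ 2) ((2 : ℕ) * S t ^ (2 - 1) * (∑ k, y' t k)) t :=
      (hS t).pow 2
    have := (hA.sub (hQ t)).sub hB
    refine this.congr_deriv ?_
    have h2 : ∑ k, 2 * y t k * y' t k = 2 * ∑ k, y t k * y' t k := by
      rw [Finset.mul_sum]; exact Finset.sum_congr rfl (fun k _ => by ring)
    rw [hsum t, h2]
    push_cast
    ring
  -- s is constant
  have hconst : ∀ t t' : ℝ, s t = s t' :=
    is_const_of_deriv_eq_zero (fun t => (hsderiv t).differentiableAt)
      (fun t => (hsderiv t).deriv)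
  have hQnn : ∀ t : ℝ, 0 ≤ Q t := fun t => Finset.sum_nonneg (fun k _ => sq_nonneg _)
  -- main argument
  intro t₀
  by_contra hcon
  push_neg at hcon
  have hc0 : ∀ t : ℝ, 0 ≤ s t := by
    intro t
    rw [hconst t t₀]
    exact hcon
  -- the derivative of S is ≥ S²/2
  have hd : ∀ t : ℝ, (S t) ^ 2 / 2 ≤ ∑ k, y' t k := by
    intro t
    have h1 := hc0 t
    have h2 := hQnn t
    simp only [hsdef] at h1
    linarith
  have hmono : Monotone S := by
    apply monotone_of_deriv_nonneg (fun t => (hS t).differentiableAt)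
    intro t
    rw [(hS t).deriv]
    have := hd t
    nlinarith [sq_nonneg (S t)]
  -- auxiliary: the function g is antitone on sets where S ≠ 0
  have hg : ∀ (D : Set ℝ), Convex ℝ D → (∀ t ∈ D, S t ≠ 0) →
      AntitoneOn (fun u => (S u)⁻¹ + u / 2) D := by
    intro D hD hne
    have hder : ∀ t ∈ D, HasDerivAt (fun u => (S u)⁻¹ + u / 2)
        (-(∑ k, y' t k) / (S t) ^ 2 + 1 / 2) t := by
      intro t ht
      exact ((hS t).inv (hne t ht)).add ((hasDerivAt_id t).div_const 2)
    apply antitoneOn_of_deriv_nonpos hD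
    · exact fun t ht => (hder t ht).continuousAt.continuousWithinAt
    · intro t ht
      exact ((hder t (interior_subset ht)).differentiableAt).differentiableWithinAt
    · intro t ht
      rw [(hder t (interior_subset ht)).deriv]
      have hne' := hne t (interior_subset ht)
      have hpos : 0 < (S t) ^ 2 := by positivity
      have h1 := hd t
      rw [div_add' _ _ _ (ne_of_gt hpos), div_nonpos_iff]
      right
      exact ⟨by linarith, by positivity⟩
  by_cases hz : ∀ t : ℝ, S t = 0
  · -- S ≡ 0 : then Q ≡ -c ≤ 0, so y ≡ 0, contradiction
    obtain ⟨t, j, hj⟩ := hnz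
    have hS0 : HasDerivAt S 0 t := by
      have : S = fun _ => (0 : ℝ) := funext hz
      rw [this]; exact hasDerivAt_const t 0
    have hsum0 : ∑ k, y' t k = 0 := by
      have := (hS t).unique hS0
      exact this
    have hst := hc0 t
    simp only [hsdef, hsum0, hz t] at hst
    have hQ0 : Q t = 0 := le_antisymm (by linarith) (hQnn t)
    have := (Finset.sum_eq_zero_iff_of_nonneg
      (fun k _ => sq_nonneg (y t k))).mp hQ0 j (Finset.mem_univ j)
    exact hj (by nlinarith [this])
  · push_neg at hz
    obtain ⟨t₁, ht₁⟩ := hz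
    rcases ht₁.lt_or_gt with hneg | hpos
    · -- S t₁ < 0 : backward blow-up
      have hDne : ∀ t ∈ Set.Iic t₁, S t ≠ 0 := fun t ht =>
        ne_of_lt (lt_of_le_of_lt (hmono ht) hneg)
      have hanti := hg (Set.Iic t₁) (convex_Iic t₁) hDne
      set t₂ : ℝ := t₁ + 2 * (S t₁)⁻¹ with ht₂
      have hinvneg : (S t₁)⁻¹ < 0 := inv_lt_zero.mpr hneg
      have ht₂le : t₂ ≤ t₁ := by rw [ht₂]; linarith
      have key := hanti (Set.mem_Iic.mpr ht₂le) (Set.mem_Iic.mpr le_rfl) ht₂le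
      simp only at key
      -- (S t₁)⁻¹ + t₁/2 ≤ (S t₂)⁻¹ + t₂/2
      have hS2neg : S t₂ < 0 := lt_of_le_of_lt (hmono ht₂le) hneg
      have h3 : (S t₂)⁻¹ < 0 := inv_lt_zero.mpr hS2neg
      rw [ht₂] at key
      linarith
    · -- S t₁ > 0 : forward blow-up
      have hDne : ∀ t ∈ Set.Ici t₁, S t ≠ 0 := fun t ht =>
        ne_of_gt (lt_of_lt_of_le hpos (hmono ht))
      have hanti := hg (Set.Ici t₁) (convex_Ici t₁) hDne
      set t₂ : ℝ := t₁ + 2 * (S t₁)⁻¹ with ht₂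
      have hinvpos : 0 < (S t₁)⁻¹ := inv_pos.mpr hpos
      have ht₂ge : t₁ ≤ t₂ := by rw [ht₂]; linarith
      have key := hanti (Set.mem_Ici.mpr le_rfl) (Set.mem_Ici.mpr ht₂ge) ht₂ge
      simp only at key
      have hS2pos : 0 < S t₂ := lt_of_lt_of_le hpos (hmono ht₂ge)
      have h3 : 0 < (S t₂)⁻¹ := inv_pos.mpr hS2pos
      rw [ht₂] at key
      linarith
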